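/- Let α ∈ (0,1), C₀ > 0, Δt > 0 and n ≥ 2 an integer, with tₖ = kΔt. Let y : [0,∞) → ℝ be continuous on [0,∞), differentiable on (0,∞), with |y′(t)| ≤ C₀(1 + t^{α−1}) for all t > 0. Then |2y(t_{n−1}) − y(t_{n−2}) − y(tₙ)| ≤ 2C₀Δt + (C₀/α)(tₙ^α − t_{n−2}^α). -/

import Mathlib

lemma stmt_2_aux (α C₀ : ℝ) (hα : 0 < α) (y : ℝ → ℝ)
    (hcont : ContinuousOn y (Set.Ici (0 : ℝ)))
    (hdiff : ∀ t : ℝ, 0 < t → DifferentiableAt ℝ y t)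
    (hb : ∀ t : ℝ, 0 < t → deriv y t ≤ C₀ * (1 + t ^ (α - 1))) :
    MonotoneOn (fun t => C₀ * t + (C₀ / α) * t ^ α - y t) (Set.Ici (0 : ℝ)) := by
  have key : ∀ t : ℝ, 0 < t →
      HasDerivAt (fun s => C₀ * s + (C₀ / α) * s ^ α - y s)
        (C₀ * (1 + t ^ (α - 1)) - deriv y t) t := by
    intro t ht
    have hy := (hdiff t ht).hasDerivAt
    have hr : HasDerivAt (fun s : ℝ => s ^ α) (α * t ^ (α - 1)) t :=
      Real.hasDerivAt_rpow_const (Or.inl ht.ne')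
    have h := ((HasDerivAt.const_mul C₀ (hasDerivAt_id t)).add
      (HasDerivAt.const_mul (C₀ / α) hr)).sub hy
    convert h using 1
    · rfl
    · rfl
    · rfl
    rw [show C₀ / α * (α * t ^ (α - 1)) = C₀ * t ^ (α - 1) by
      rw [div_mul_eq_mul_div, mul_comm α, ← mul_assoc, mul_div_assoc, div_self hα.ne', mul_one]]
    ring
  apply monotoneOn_of_deriv_nonneg (convex_Ici 0)
  · apply ContinuousOn.sub _ hcont
    apply Continuous.continuousOn
    apply Continuous.add (continuous_const.mul continuous_id)
    exact continuous_const.mul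
      (continuous_iff_continuousAt.mpr fun x => Real.continuousAt_rpow_const x α (Or.inr hα.le))
  · rw [interior_Ici]
    intro t ht
    exact ((key t ht).differentiableAt).differentiableWithinAt
  · rw [interior_Ici]
    intro t ht
    rw [(key t ht).deriv]
    have := hb t ht
    linarith

/-- Intermediate estimate in the proof of the paper's Lemma 1 (extrapolation error):
`|2y(t_{n−1}) − y(t_{n−2}) − y(tₙ)| ≤ 2C₀Δt + (C₀/α)(tₙ^α − t_{n−2}^α)`. -/
theorem stmt_2 (α C₀ Δt : ℝ) (hα : α ∈ Set.Ioo (0 : ℝ) 1) (hC₀ : 0 < C₀)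
    (hΔt : 0 < Δt) (n : ℕ) (hn : 2 ≤ n)
    (y : ℝ → ℝ)
    (hcont : ContinuousOn y (Set.Ici (0 : ℝ)))
    (hdiff : ∀ t : ℝ, 0 < t → DifferentiableAt ℝ y t)
    (hbound : ∀ t : ℝ, 0 < t → |deriv y t| ≤ C₀ * (1 + t ^ (α - 1))) :
    |2 * y (((n : ℝ) - 1) * Δt) - y (((n : ℝ) - 2) * Δt) - y ((n : ℝ) * Δt)|
      ≤ 2 * C₀ * Δt + (C₀ / α) * (((n : ℝ) * Δt) ^ α - (((n : ℝ) - 2) * Δt) ^ α) := by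
  obtain ⟨hα0, hα1⟩ := hα
  set F : ℝ → ℝ := fun t => C₀ * t + (C₀ / α) * t ^ α with hF
  have hn2 : (2 : ℝ) ≤ (n : ℝ) := by exact_mod_cast hn
  set a : ℝ := ((n : ℝ) - 2) * Δt with ha
  set b : ℝ := ((n : ℝ) - 1) * Δt with hb
  set c : ℝ := (n : ℝ) * Δt with hc
  have ha0 : (0 : ℝ) ≤ a := mul_nonneg (by linarith) hΔt.le
  have hab : a ≤ b := by
    apply mul_le_mul_of_nonneg_right (by linarith) hΔt.le
  have hbc : b ≤ c := by
    apply mul_le_mul_of_nonneg_right (by linarith) hΔt.le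
  have hb0 : (0 : ℝ) ≤ b := le_trans ha0 hab
  have hc0 : (0 : ℝ) ≤ c := le_trans hb0 hbc
  have m1 : MonotoneOn (fun t => F t - y t) (Set.Ici (0 : ℝ)) :=
    stmt_2_aux α C₀ hα0 y hcont hdiff
      (fun t ht => (abs_le.mp (hbound t ht)).2)
  have m2 : MonotoneOn (fun t => F t - (-y) t) (Set.Ici (0 : ℝ)) := by
    apply stmt_2_aux α C₀ hα0 (-y) hcont.neg (fun t ht => (hdiff t ht).neg)
    intro t ht
    rw [show deriv (-y) t = -deriv y t from deriv.neg]
    have := (abs_le.mp (hbound t ht)).1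
    linarith
  have key : ∀ u v : ℝ, 0 ≤ u → u ≤ v → |y v - y u| ≤ F v - F u := by
    intro u v hu huv
    have h1 := m1 (Set.mem_Ici.mpr hu) (Set.mem_Ici.mpr (le_trans hu huv)) huv
    have h2 := m2 (Set.mem_Ici.mpr hu) (Set.mem_Ici.mpr (le_trans hu huv)) huv
    simp only [Pi.neg_apply] at h1 h2
    rw [abs_le]
    constructor <;> linarith
  have k1 := key a b ha0 hab
  have k2 := key b c hb0 hbc
  have habs : |2 * y b - y a - y c| ≤ (F b - F a) + (F c - F b) := by
    have := abs_add_le (y b - y a) (y b - y c)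
    have e : 2 * y b - y a - y c = (y b - y a) + (y b - y c) := by ring
    rw [e]
    calc |(y b - y a) + (y b - y c)| ≤ |y b - y a| + |y b - y c| := abs_add_le _ _
      _ ≤ (F b - F a) + (F c - F b) := by
          rw [abs_sub_comm (y b) (y c)]
          exact add_le_add k1 k2
  have hca : c - a = 2 * Δt := by rw [hc, ha]; ring
  have hFeq : F c - F a = 2 * C₀ * Δt + (C₀ / α) * (c ^ α - a ^ α) := by
    simp only [hF]
    linear_combination C₀ * hca
  calc |2 * y b - y a - y c| ≤ F b - F a + (F c - F b) := habs
    _ = F c - F a := by ring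
    _ = 2 * C₀ * Δt + (C₀ / α) * (c ^ α - a ^ α) := hFeq
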